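/- For every real u with −1/12 < u < 1/12, the series (1/16)·Σ_{j=0}^{∞} (−1)^{j}·12^{j}·((2j+5)!·(28j+65)/(30·4^{j}·j!·(j+2)!·(2j+5)) − 13·(j+2)·(j+1))·u^{j+1} converges and its sum equals (7u/4)·(1 + 12u)^{−7/2}·(1 − (1 + 12u)/14 − (13/14)·√(1 + 12u)). -/

import Mathlib

open Filter

private lemma aux_summable (k : ℕ) {s : ℝ} (h0 : 0 < s) (h1 : s < 1) :
    Summable fun n : ℕ => ((n : ℝ) + 1) ^ k * s ^ n := by
  have hs : ‖s‖ < 1 := by rw [Real.norm_eq_abs, abs_of_pos h0]; exact h1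
  have h := (summable_nat_add_iff 1).2
    (summable_pow_mul_geometric_of_norm_lt_one k (r := s) hs)
  have h2 := h.mul_left s⁻¹
  refine h2.congr fun n => ?_
  push_cast
  field_simp
  ring

private lemma summable_poly_bound (b : ℕ → ℝ) (C : ℝ) (k : ℕ)
    (hb : ∀ n, |b n| ≤ C * ((n : ℝ) + 1) ^ k) {x : ℝ} (hx : |x| < 1) :
    Summable fun n : ℕ => b n * x ^ n := by
  have hC : 0 ≤ C := by
    have h := (abs_nonneg (b 0)).trans (hb 0)
    simpa using h
  set s : ℝ := (|x| + 1) / 2 with hs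
  have h0 : 0 < s := by positivity
  have h1 : s < 1 := by rw [hs]; linarith
  have hxs : |x| ≤ s := by rw [hs]; linarith
  refine Summable.of_norm (Summable.of_nonneg_of_le (fun n => norm_nonneg _)
    (fun n => ?_) ((aux_summable k h0 h1).mul_left C))
  rw [norm_mul, norm_pow, Real.norm_eq_abs, Real.norm_eq_abs]
  calc |b n| * |x| ^ n ≤ (C * ((n : ℝ) + 1) ^ k) * s ^ n := by
        apply mul_le_mul (hb n) (pow_le_pow_left₀ (abs_nonneg x) hxs n)
          (by positivity) (by positivity)
    _ = C * (((n : ℝ) + 1) ^ k * s ^ n) := by ring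

private lemma hasDerivAt_tsum_poly (b : ℕ → ℝ) (C : ℝ) (k : ℕ)
    (hb : ∀ n, |b n| ≤ C * ((n : ℝ) + 1) ^ k) {x : ℝ} (hx : |x| < 1) :
    HasDerivAt (fun y : ℝ => ∑' n : ℕ, b n * y ^ n)
      (∑' n : ℕ, ((n : ℝ) + 1) * b (n + 1) * x ^ n) x := by
  have hC : 0 ≤ C := by
    have h := (abs_nonneg (b 0)).trans (hb 0)
    simpa using h
  set r : ℝ := (|x| + 1) / 2 with hr
  have hr0 : 0 < r := by positivity
  have hr1 : r < 1 := by rw [hr]; linarith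
  have hxr : |x| < r := by rw [hr]; linarith
  -- the bound on derivatives
  have hbnd : ∀ n : ℕ, ∀ y : ℝ, y ∈ Set.Ioo (-r) r →
      ‖b n * ((n : ℝ) * y ^ (n - 1))‖ ≤ C / r * ((n : ℝ) + 1) ^ (k + 1) * r ^ n := by
    intro n y hy
    have hyr : |y| ≤ r := by
      rw [abs_le]; exact ⟨(hy.1).le, (hy.2).le⟩
    rw [norm_mul, norm_mul, Real.norm_eq_abs, Real.norm_eq_abs, Real.norm_eq_abs, abs_pow]
    match n with
    | 0 => simp; positivity
    | (m+1) =>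
      have h1 : |y| ^ (m + 1 - 1) ≤ r ^ m := by
        simpa using pow_le_pow_left₀ (abs_nonneg y) hyr m
      have h2 : |b (m+1)| ≤ C * ((m : ℝ) + 2) ^ k := by
        have h := hb (m+1)
        have e : ((m : ℝ) + 1 + 1) = (m : ℝ) + 2 := by ring
        push_cast at h; rw [e] at h; exact h
      have h3 : |(((m : ℕ) + 1 : ℕ) : ℝ)| ≤ (m : ℝ) + 2 := by
        push_cast; rw [abs_of_nonneg (by positivity)]; linarith
      calc |b (m+1)| * (|(((m : ℕ) + 1 : ℕ) : ℝ)| * |y| ^ (m + 1 - 1))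
          ≤ (C * ((m : ℝ) + 2) ^ k) * (((m : ℝ) + 2) * r ^ m) := by
            apply mul_le_mul h2 _ (by positivity) (by positivity)
            apply mul_le_mul h3 h1 (by positivity) (by positivity)
        _ = C / r * ((m : ℝ) + 2) ^ (k + 1) * (r ^ m * r) := by
            field_simp; ring
        _ = C / r * (((m + 1 : ℕ) : ℝ) + 1) ^ (k + 1) * r ^ (m + 1) := by
            rw [← pow_succ]; push_cast; ring_nf
  have hu : Summable fun n : ℕ => C / r * ((n : ℝ) + 1) ^ (k + 1) * r ^ n := by
    have := (aux_summable (k + 1) hr0 hr1).mul_left (C / r)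
    refine this.congr fun n => by ring
  have key := hasDerivAt_tsum_of_isPreconnected hu isOpen_Ioo
    (isPreconnected_Ioo (a := -r) (b := r))
    (g := fun n y => b n * y ^ n) (g' := fun n y => b n * ((n : ℝ) * y ^ (n - 1)))
    (fun n y _ => ((hasDerivAt_pow n y).const_mul (b n)))
    (fun n y hy => hbnd n y hy)
    (y₀ := 0) (by constructor <;> [linarith; linarith])
    (summable_poly_bound b C k hb (by simp))
    (y := x) (by rw [Set.mem_Ioo, ← abs_lt]; exact hxr)
  refine key.congr_deriv (Eq.symm ?_)
  -- identify the two tsums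
  have hs : Summable fun n : ℕ => b n * ((n : ℝ) * x ^ (n - 1)) := by
    refine Summable.of_norm (Summable.of_nonneg_of_le (fun n => norm_nonneg _)
      (fun n => hbnd n x (by rw [Set.mem_Ioo, ← abs_lt]; exact hxr)) hu)
  rw [Summable.tsum_eq_zero_add hs]
  simp only [Nat.cast_zero, zero_mul, mul_zero, zero_add]
  apply tsum_congr
  intro n
  push_cast
  ring

private lemma hasDerivAt_one_sub_rpow (p : ℝ) {x : ℝ} (hx : |x| < 1) :
    HasDerivAt (fun y : ℝ => (1 - y) ^ p) (-p * (1 - x) ^ (p - 1)) x := by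
  have h0 : 0 < 1 - x := by
    have := abs_lt.1 hx; linarith [this.2]
  have hb : HasDerivAt (fun y : ℝ => 1 - y) (-1) x := by
    simpa using (hasDerivAt_id x).const_sub 1
  have hr := Real.hasDerivAt_rpow_const (x := 1 - x) (p := p) (Or.inl h0.ne')
  have := HasDerivAt.comp x hr hb
  exact this.congr_deriv (by ring)

private lemma series_step (b : ℕ → ℝ) (C : ℝ) (k : ℕ)
    (hb : ∀ n, |b n| ≤ C * ((n : ℝ) + 1) ^ k)
    (S S' : ℝ → ℝ)
    (hS : ∀ x : ℝ, |x| < 1 → HasSum (fun n : ℕ => b n * x ^ n) (S x))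
    (hS' : ∀ x : ℝ, |x| < 1 → HasDerivAt S (S' x) x) :
    ∀ x : ℝ, |x| < 1 → HasSum (fun n : ℕ => ((n : ℝ) + 1) * b (n + 1) * x ^ n) (S' x) := by
  intro x hx
  have hC : 0 ≤ C := by
    have h := (abs_nonneg (b 0)).trans (hb 0); simpa using h
  -- summability of the derived series
  have hb' : ∀ n : ℕ, |((n : ℝ) + 1) * b (n + 1)| ≤ (C * 2 ^ k) * ((n : ℝ) + 1) ^ (k + 1) := by
    intro n
    rw [abs_mul, abs_of_nonneg (by positivity : (0:ℝ) ≤ (n : ℝ) + 1)]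
    have h2 : |b (n+1)| ≤ C * ((n : ℝ) + 2) ^ k := by
      have h := hb (n+1)
      have e : ((n : ℝ) + 1 + 1) = (n : ℝ) + 2 := by ring
      push_cast at h; rw [e] at h; exact h
    have h3 : ((n : ℝ) + 2) ^ k ≤ (2 * ((n : ℝ) + 1)) ^ k := by
      apply pow_le_pow_left₀ (by positivity); linarith
    calc ((n : ℝ) + 1) * |b (n + 1)| ≤ ((n : ℝ) + 1) * (C * (2 * ((n : ℝ) + 1)) ^ k) := by
          apply mul_le_mul_of_nonneg_left (h2.trans (by
            apply mul_le_mul_of_nonneg_left h3 hC)) (by positivity)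
      _ = (C * 2 ^ k) * ((n : ℝ) + 1) ^ (k + 1) := by rw [mul_pow]; ring
  have hsum' : Summable fun n : ℕ => ((n : ℝ) + 1) * b (n + 1) * x ^ n :=
    summable_poly_bound _ (C * 2 ^ k) (k + 1) hb' hx
  -- the tsum function agrees with S near x
  have heq : (fun y : ℝ => ∑' n : ℕ, b n * y ^ n) =ᶠ[nhds x] S := by
    filter_upwards [isOpen_Ioo.mem_nhds (show x ∈ Set.Ioo (-1 : ℝ) 1 by
      rw [Set.mem_Ioo, ← abs_lt]; exact hx)] with y hy
    exact (hS y (by rw [abs_lt]; exact ⟨hy.1, hy.2⟩)).tsum_eq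
  have hd1 := hasDerivAt_tsum_poly b C k hb hx
  have hd2 : HasDerivAt S (∑' n : ℕ, ((n : ℝ) + 1) * b (n + 1) * x ^ n) x :=
    hd1.congr_of_eventuallyEq heq.symm
  have : (∑' n : ℕ, ((n : ℝ) + 1) * b (n + 1) * x ^ n) = S' x :=
    hd2.unique (hS' x hx)
  rw [← this]
  exact hsum'.hasSum

private noncomputable def cb (n : ℕ) : ℝ := (Nat.centralBinom n : ℝ) / 4 ^ n

private lemma cb_zero : cb 0 = 1 := by simp [cb, Nat.centralBinom]

private lemma cb_nonneg (n : ℕ) : 0 ≤ cb n := by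
  unfold cb; positivity

private lemma cb_rec (n : ℕ) : 2 * ((n : ℝ) + 1) * cb (n + 1) = (2 * n + 1) * cb n := by
  have h := Nat.succ_mul_centralBinom_succ n
  have h' : ((n + 1 : ℕ) : ℝ) * (Nat.centralBinom (n + 1) : ℝ)
      = 2 * (2 * (n : ℝ) + 1) * (Nat.centralBinom n : ℝ) := by
    exact_mod_cast congrArg (fun m : ℕ => (m : ℝ)) h
  unfold cb
  have h4 : (4 : ℝ) ^ (n + 1) = 4 * 4 ^ n := by rw [pow_succ]; ring
  rw [h4]
  field_simp
  push_cast at h'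
  nlinarith [h', pow_pos (show (0:ℝ) < 4 by norm_num) n]

private lemma cb_le_one (n : ℕ) : cb n ≤ 1 := by
  induction n with
  | zero => rw [cb_zero]
  | succ m ih =>
    have hrec := cb_rec m
    have h0 := cb_nonneg m
    have h1 := cb_nonneg (m + 1)
    have hm : (0 : ℝ) < 2 * ((m : ℝ) + 1) := by positivity
    nlinarith

private lemma cb_bound (n : ℕ) : |cb n| ≤ 1 * ((n : ℝ) + 1) ^ 0 := by
  rw [abs_of_nonneg (cb_nonneg n)]
  simpa using cb_le_one n

private noncomputable def Fcb : ℝ → ℝ := fun y => ∑' n : ℕ, cb n * y ^ n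

private noncomputable def Dcb : ℝ → ℝ := fun y => ∑' n : ℕ, ((n : ℝ) + 1) * cb (n + 1) * y ^ n

private lemma cb1_bound (n : ℕ) : |((n : ℝ) + 1) * cb (n + 1)| ≤ 1 * ((n : ℝ) + 1) ^ 1 := by
  rw [abs_mul, abs_of_nonneg (by positivity : (0:ℝ) ≤ (n : ℝ) + 1), pow_one, one_mul]
  have h := abs_of_nonneg (cb_nonneg (n+1)) ▸ cb_le_one (n+1)
  calc ((n : ℝ) + 1) * |cb (n + 1)| ≤ ((n : ℝ) + 1) * 1 := by
        apply mul_le_mul_of_nonneg_left _ (by positivity)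
        rw [abs_of_nonneg (cb_nonneg (n+1))]; exact cb_le_one (n+1)
    _ = (n : ℝ) + 1 := by ring

private lemma Fcb_deriv {x : ℝ} (hx : |x| < 1) : HasDerivAt Fcb (Dcb x) x :=
  hasDerivAt_tsum_poly cb 1 0 cb_bound hx

private lemma Fcb_hasSum {x : ℝ} (hx : |x| < 1) :
    HasSum (fun n : ℕ => cb n * x ^ n) (Fcb x) :=
  (summable_poly_bound cb 1 0 cb_bound hx).hasSum

private lemma Dcb_hasSum {x : ℝ} (hx : |x| < 1) :
    HasSum (fun n : ℕ => ((n : ℝ) + 1) * cb (n + 1) * x ^ n) (Dcb x) :=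
  (summable_poly_bound _ 1 1 cb1_bound hx).hasSum

private lemma cb_ode {x : ℝ} (hx : |x| < 1) : 2 * (1 - x) * Dcb x = Fcb x := by
  have hd := Dcb_hasSum hx
  have h2d : HasSum (fun n : ℕ => (2 * (n : ℝ) + 1) * cb n * x ^ n) (2 * Dcb x) := by
    have hfun : (fun n : ℕ => (2 * (n : ℝ) + 1) * cb n * x ^ n)
        = fun n : ℕ => 2 * (((n : ℝ) + 1) * cb (n + 1) * x ^ n) := by
      funext n
      have := cb_rec n
      linear_combination (-(x ^ n)) * this
    rw [hfun]
    exact hd.mul_left 2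
  have hxd : HasSum (fun n : ℕ => 2 * ((n : ℝ) + 1) * cb (n + 1) * x ^ (n + 1))
      (2 * x * Dcb x) := by
    have hfun : (fun n : ℕ => 2 * x * (((n : ℝ) + 1) * cb (n + 1) * x ^ n))
        = fun n : ℕ => 2 * ((n : ℝ) + 1) * cb (n + 1) * x ^ (n + 1) := by
      funext n; ring
    have h := hd.mul_left (2 * x)
    rw [hfun] at h
    exact h
  have hg : HasSum (fun n : ℕ => 2 * (n : ℝ) * cb n * x ^ n) (2 * x * Dcb x + 0) := by
    have h1 : (fun n : ℕ => 2 * ((n : ℝ) + 1) * cb (n + 1) * x ^ (n + 1))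
        = fun n : ℕ => 2 * ((n + 1 : ℕ) : ℝ) * cb (n + 1) * x ^ (n + 1) := by
      funext n; push_cast; ring
    rw [h1] at hxd
    have h2 := (hasSum_nat_add_iff (f := fun n : ℕ => 2 * (n : ℝ) * cb n * x ^ n) 1).1 hxd
    simpa using h2
  have hsub := h2d.sub hg
  have hfun2 : (fun n : ℕ => (2 * (n : ℝ) + 1) * cb n * x ^ n - 2 * (n : ℝ) * cb n * x ^ n)
      = fun n : ℕ => cb n * x ^ n := by
    funext n; ring
  rw [hfun2] at hsub
  have := hsub.unique (Fcb_hasSum hx)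
  linarith [this]

private lemma Fcb_zero : Fcb 0 = 1 := by
  unfold Fcb
  rw [tsum_eq_single 0 (fun n hn => by simp [zero_pow hn])]
  simp [cb_zero]

private lemma Hcb_deriv {x : ℝ} (hx : |x| < 1) :
    HasDerivAt (fun z : ℝ => (1 - z) * Fcb z ^ 2) 0 x := by
  have hF := Fcb_deriv hx
  have h1 : HasDerivAt (fun z : ℝ => 1 - z) (-1) x := by
    simpa using (hasDerivAt_id x).const_sub 1
  have h2 : HasDerivAt (fun z : ℝ => Fcb z ^ 2) (2 * Fcb x ^ 1 * Dcb x) x := hF.pow 2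
  have h3 := h1.mul h2
  have hode := cb_ode hx
  refine h3.congr_deriv (Eq.symm ?_)
  simp only [pow_one]
  linear_combination (-(Fcb x)) * hode

private lemma Fcb_sq {x : ℝ} (hx : |x| < 1) : (1 - x) * Fcb x ^ 2 = 1 := by
  have hmem : ∀ z : ℝ, z ∈ Set.uIcc 0 x → |z| < 1 := by
    intro z hz
    rw [Set.uIcc_eq_union] at hz
    rcases hz with hz | hz
    · rcases Set.mem_Icc.1 hz with ⟨hz1, hz2⟩
      rw [abs_lt]; constructor <;> nlinarith [abs_lt.1 hx]
    · rcases Set.mem_Icc.1 hz with ⟨hz1, hz2⟩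
      rw [abs_lt]; constructor <;> nlinarith [abs_lt.1 hx]
  have hcont : ∀ z : ℝ, z ∈ Set.uIcc 0 x →
      ContinuousAt (fun z : ℝ => (1 - z) * Fcb z ^ 2) z :=
    fun z hz => (Hcb_deriv (hmem z hz)).continuousAt
  rcases le_total 0 x with hx0 | hx0
  · have := constant_of_has_deriv_right_zero
      (f := fun z : ℝ => (1 - z) * Fcb z ^ 2) (a := 0) (b := x)
      (continuousOn_of_forall_continuousAt (fun z hz => hcont z (by
        rwa [Set.uIcc_of_le hx0])))
      (fun z hz => (Hcb_deriv (hmem z (by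
        rw [Set.uIcc_of_le hx0]; exact Set.mem_Icc.2 ⟨hz.1, hz.2.le⟩))).hasDerivWithinAt)
      x (Set.mem_Icc.2 ⟨hx0, le_refl x⟩)
    simp only [Fcb_zero] at this
    norm_num at this
    linarith [this]
  · have := constant_of_has_deriv_right_zero
      (f := fun z : ℝ => (1 - z) * Fcb z ^ 2) (a := x) (b := 0)
      (continuousOn_of_forall_continuousAt (fun z hz => hcont z (by
        rwa [Set.uIcc_of_ge hx0])))
      (fun z hz => (Hcb_deriv (hmem z (by
        rw [Set.uIcc_of_ge hx0]; exact Set.mem_Icc.2 ⟨hz.1, hz.2.le⟩))).hasDerivWithinAt)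
      0 (Set.mem_Icc.2 ⟨hx0, le_refl 0⟩)
    simp only [Fcb_zero] at this
    norm_num at this
    linarith [this]

private lemma Fcb_pos {x : ℝ} (hx : |x| < 1) : 0 < Fcb x := by
  have hne : ∀ z : ℝ, |z| < 1 → Fcb z ≠ 0 := by
    intro z hz h0
    have := Fcb_sq hz
    rw [h0] at this
    norm_num at this
  by_contra hle
  push_neg at hle
  have hlt : Fcb x < 0 := lt_of_le_of_ne hle (hne x hx)
  have hmem : ∀ z : ℝ, z ∈ Set.uIcc 0 x → |z| < 1 := by
    intro z hz
    rw [Set.uIcc_eq_union] at hz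
    rcases hz with hz | hz
    · rcases Set.mem_Icc.1 hz with ⟨hz1, hz2⟩
      rw [abs_lt]; constructor <;> nlinarith [abs_lt.1 hx]
    · rcases Set.mem_Icc.1 hz with ⟨hz1, hz2⟩
      rw [abs_lt]; constructor <;> nlinarith [abs_lt.1 hx]
  have hcont : ContinuousOn Fcb (Set.uIcc 0 x) :=
    continuousOn_of_forall_continuousAt fun z hz => (Fcb_deriv (hmem z hz)).continuousAt
  have h0mem : (0 : ℝ) ∈ Set.uIcc (Fcb 0) (Fcb x) := by
    rw [Fcb_zero]
    exact Set.mem_uIcc.2 (Or.inr ⟨hlt.le, by norm_num⟩)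
  obtain ⟨z, hz, hz0⟩ := intermediate_value_uIcc hcont h0mem
  exact hne z (hmem z hz) hz0

private lemma cb_hasSum {x : ℝ} (hx : |x| < 1) :
    HasSum (fun n : ℕ => cb n * x ^ n) ((1 - x) ^ (-(1 / 2) : ℝ)) := by
  have h0 : 0 < 1 - x := by linarith [(abs_lt.1 hx).2]
  have hsq := Fcb_sq hx
  have hpos := Fcb_pos hx
  have hrpos : 0 < (1 - x) ^ (-(1 / 2) : ℝ) := Real.rpow_pos_of_pos h0 _
  have hrsq : ((1 - x) ^ (-(1 / 2) : ℝ)) ^ 2 = (1 - x)⁻¹ := by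
    rw [← Real.rpow_natCast ((1 - x) ^ (-(1 / 2) : ℝ)) 2, ← Real.rpow_mul h0.le]
    norm_num
    exact Real.rpow_neg_one (1 - x)
  have hFval : Fcb x = (1 - x) ^ (-(1 / 2) : ℝ) := by
    have h1 : Fcb x ^ 2 = ((1 - x) ^ (-(1 / 2) : ℝ)) ^ 2 := by
      rw [hrsq]
      field_simp
      linarith [hsq]
    nlinarith [h1, hpos, hrpos]
  rw [← hFval]
  exact Fcb_hasSum hx

private noncomputable def c1 (n : ℕ) : ℝ := ((n : ℝ) + 1) * cb (n + 1)
private noncomputable def c2 (n : ℕ) : ℝ := ((n : ℝ) + 1) * c1 (n + 1)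
private noncomputable def c3 (n : ℕ) : ℝ := ((n : ℝ) + 1) * c2 (n + 1)

private lemma cb_abs_le_one (m : ℕ) : |cb m| ≤ 1 := by
  rw [abs_of_nonneg (cb_nonneg m)]; exact cb_le_one m

private lemma c1_abs (n : ℕ) : |c1 n| ≤ (n : ℝ) + 1 := by
  unfold c1
  rw [abs_mul, abs_of_nonneg (by positivity : (0:ℝ) ≤ (n : ℝ) + 1)]
  calc ((n : ℝ) + 1) * |cb (n + 1)| ≤ ((n : ℝ) + 1) * 1 :=
        mul_le_mul_of_nonneg_left (cb_abs_le_one _) (by positivity)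
    _ = (n : ℝ) + 1 := by ring

private lemma c2_abs (n : ℕ) : |c2 n| ≤ ((n : ℝ) + 1) * ((n : ℝ) + 2) := by
  unfold c2
  rw [abs_mul, abs_of_nonneg (by positivity : (0:ℝ) ≤ (n : ℝ) + 1)]
  have h := c1_abs (n + 1)
  push_cast at h
  have : |c1 (n + 1)| ≤ (n : ℝ) + 2 := by linarith
  exact mul_le_mul_of_nonneg_left this (by positivity)

private lemma c3_abs (n : ℕ) : |c3 n| ≤ ((n : ℝ) + 1) * (((n : ℝ) + 2) * ((n : ℝ) + 3)) := by
  unfold c3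
  rw [abs_mul, abs_of_nonneg (by positivity : (0:ℝ) ≤ (n : ℝ) + 1)]
  have h := c2_abs (n + 1)
  push_cast at h
  have : |c2 (n + 1)| ≤ ((n : ℝ) + 2) * ((n : ℝ) + 3) := by nlinarith
  exact mul_le_mul_of_nonneg_left this (by positivity)

private lemma c1_bound (n : ℕ) : |c1 n| ≤ 1 * ((n : ℝ) + 1) ^ 1 := by
  simpa using c1_abs n

private lemma c2_bound (n : ℕ) : |c2 n| ≤ 2 * ((n : ℝ) + 1) ^ 2 := by
  have := c2_abs n; nlinarith [this, abs_nonneg (c2 n)]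

private lemma c3_bound (n : ℕ) : |c3 n| ≤ 6 * ((n : ℝ) + 1) ^ 3 := by
  have h := c3_abs n
  have hn : (0 : ℝ) ≤ (n : ℝ) := n.cast_nonneg
  have h1 : ((n : ℝ) + 2) ≤ 2 * ((n : ℝ) + 1) := by linarith
  have h2 : ((n : ℝ) + 3) ≤ 3 * ((n : ℝ) + 1) := by linarith
  calc |c3 n| ≤ ((n : ℝ) + 1) * (((n : ℝ) + 2) * ((n : ℝ) + 3)) := h
    _ ≤ ((n : ℝ) + 1) * ((2 * ((n : ℝ) + 1)) * (3 * ((n : ℝ) + 1))) := by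
        apply mul_le_mul_of_nonneg_left _ (by positivity)
        apply mul_le_mul h1 h2 (by positivity) (by positivity)
    _ = 6 * ((n : ℝ) + 1) ^ 3 := by ring

private lemma hasDerivAt_c_rpow (c p q : ℝ) (hq : q = p - 1) {x : ℝ} (hx : |x| < 1) :
    HasDerivAt (fun y : ℝ => c * (1 - y) ^ p) (c * -p * (1 - x) ^ q) x := by
  subst hq
  have := (hasDerivAt_one_sub_rpow p hx).const_mul c
  refine this.congr_deriv (Eq.symm ?_)
  ring

private lemma hasSum_c1 {x : ℝ} (hx : |x| < 1) :
    HasSum (fun n : ℕ => c1 n * x ^ n) ((1 / 2) * (1 - x) ^ (-(3 / 2) : ℝ)) := by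
  have h := series_step cb 1 0 cb_bound
    (fun x => (1 - x) ^ (-(1 / 2) : ℝ))
    (fun x => (1 * -(-(1 / 2) : ℝ)) * (1 - x) ^ (-(3 / 2) : ℝ))
    (fun x hx => cb_hasSum hx)
    (fun x hx => by
      have := hasDerivAt_c_rpow 1 (-(1 / 2) : ℝ) (-(3 / 2) : ℝ) (by norm_num) hx
      simpa [mul_assoc] using this)
    x hx
  have h2 : (1 * -(-(1 / 2) : ℝ)) = (1 / 2 : ℝ) := by norm_num
  rw [h2] at h
  exact h

private lemma hasSum_c2 {x : ℝ} (hx : |x| < 1) :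
    HasSum (fun n : ℕ => c2 n * x ^ n) ((3 / 4) * (1 - x) ^ (-(5 / 2) : ℝ)) := by
  have h := series_step c1 1 1 c1_bound
    (fun x => (1 / 2) * (1 - x) ^ (-(3 / 2) : ℝ))
    (fun x => ((1 / 2) * -(-(3 / 2) : ℝ)) * (1 - x) ^ (-(5 / 2) : ℝ))
    (fun x hx => hasSum_c1 hx)
    (fun x hx => by
      have := hasDerivAt_c_rpow (1 / 2) (-(3 / 2) : ℝ) (-(5 / 2) : ℝ) (by norm_num) hx
      simpa [mul_assoc] using this)
    x hx
  have h2 : ((1 / 2) * -(-(3 / 2) : ℝ)) = (3 / 4 : ℝ) := by norm_num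
  rw [h2] at h
  exact h

private lemma hasSum_c3 {x : ℝ} (hx : |x| < 1) :
    HasSum (fun n : ℕ => c3 n * x ^ n) ((15 / 8) * (1 - x) ^ (-(7 / 2) : ℝ)) := by
  have h := series_step c2 2 2 c2_bound
    (fun x => (3 / 4) * (1 - x) ^ (-(5 / 2) : ℝ))
    (fun x => ((3 / 4) * -(-(5 / 2) : ℝ)) * (1 - x) ^ (-(7 / 2) : ℝ))
    (fun x hx => hasSum_c2 hx)
    (fun x hx => by
      have := hasDerivAt_c_rpow (3 / 4) (-(5 / 2) : ℝ) (-(7 / 2) : ℝ) (by norm_num) hx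
      simpa [mul_assoc] using this)
    x hx
  have h2 : ((3 / 4) * -(-(5 / 2) : ℝ)) = (15 / 8 : ℝ) := by norm_num
  rw [h2] at h
  exact h

private lemma cb_eq (m : ℕ) :
    cb m = ((2 * m).factorial : ℝ) / ((m.factorial : ℝ) * (m.factorial : ℝ) * 4 ^ m) := by
  have h := Nat.choose_mul_factorial_mul_factorial (show m ≤ 2 * m by omega)
  rw [show 2 * m - m = m by omega] at h
  have h' : (Nat.centralBinom m : ℝ) * (m.factorial : ℝ) * (m.factorial : ℝ)
      = ((2 * m).factorial : ℝ) := by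
    exact_mod_cast congrArg (fun k : ℕ => (k : ℝ)) h
  unfold cb
  have hf : (0 : ℝ) < (m.factorial : ℝ) := by exact_mod_cast m.factorial_pos
  have h4 : (0 : ℝ) < (4 : ℝ) ^ m := by positivity
  field_simp
  linear_combination h'

private lemma term_eq (n : ℕ) :
    (1 / 16 : ℝ) * ((Nat.factorial (2 * n + 5) : ℝ) * (28 * (n : ℝ) + 65) /
        (30 * 4 ^ n * (Nat.factorial n : ℝ) * (Nat.factorial (n + 2) : ℝ) * (2 * (n : ℝ) + 5)) -
      13 * ((n : ℝ) + 2) * ((n : ℝ) + 1))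
    = (14 / 15) * c3 n - (1 / 6) * c2 n - (13 / 8) * (((n + 2).choose 2 : ℕ) : ℝ) := by
  unfold c3 c2 c1
  rw [cb_eq, cb_eq]
  rw [Nat.cast_choose_two]
  rw [show 2 * (n + 1 + 1 + 1) = ((((((2 * n) + 1) + 1) + 1) + 1) + 1) + 1 by omega,
      show 2 * (n + 1 + 1) = ((((2 * n) + 1) + 1) + 1) + 1 by omega,
      show 2 * n + 5 = (((((2 * n) + 1) + 1) + 1) + 1) + 1 by omega,
      show n + 1 + 1 + 1 = ((n + 1) + 1) + 1 by omega,
      show n + 2 = (n + 1) + 1 by omega]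
  simp only [Nat.factorial_succ, pow_succ]
  push_cast
  have hQ : (n.factorial : ℝ) ≠ 0 := by
    have : (0 : ℝ) < (n.factorial : ℝ) := by exact_mod_cast n.factorial_pos
    linarith
  have h4 : ((4 : ℝ) ^ n) ≠ 0 := by positivity
  have h25 : (2 * (n : ℝ) + 5) ≠ 0 := by positivity
  have h1 : ((n : ℝ) + 1) ≠ 0 := by positivity
  have h2 : ((n : ℝ) + 2) ≠ 0 := by positivity
  have h3 : ((n : ℝ) + 3) ≠ 0 := by positivity
  field_simp
  ring


/-- Power series of the genus-two free-energy derivative `ℰ₄` of the quartic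
matrix model: for `-1/12 < u < 1/12`,
`(1/16) Σ_{j≥0} (-1)^j 12^j ((2j+5)!(28j+65)/(30·4^j·j!(j+2)!(2j+5)) - 13(j+2)(j+1)) u^(j+1)
  = (7u/4)(1 + 12u)^(-7/2)(1 - (1 + 12u)/14 - (13/14)√(1 + 12u))`. -/
theorem genus_two_free_energy_series (u : ℝ)
    (h1 : -1 / 12 < u) (h2 : u < 1 / 12) :
    HasSum
      (fun j : ℕ => (1 / 16 : ℝ) * ((-1 : ℝ) ^ j * 12 ^ j *
        ((Nat.factorial (2 * j + 5) : ℝ) * (28 * (j : ℝ) + 65) /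
            (30 * 4 ^ j * (Nat.factorial j : ℝ) * (Nat.factorial (j + 2) : ℝ) * (2 * (j : ℝ) + 5)) -
          13 * ((j : ℝ) + 2) * ((j : ℝ) + 1)) * u ^ (j + 1)))
      ((7 * u / 4) * (1 + 12 * u) ^ (-(7 : ℝ) / 2) *
        (1 - (1 + 12 * u) / 14 - (13 / 14) * Real.sqrt (1 + 12 * u))) := by
  have hx : |(-(12 * u))| < 1 := by
    rw [abs_lt]; constructor <;> [linarith; linarith]
  have hnx : ‖(-(12 * u))‖ < 1 := by rw [Real.norm_eq_abs]; exact hx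
  have hy : (0 : ℝ) < 1 + 12 * u := by linarith
  have hyx : (1 : ℝ) - -(12 * u) = 1 + 12 * u := by ring
  -- the three constituent series
  have hA := (hasSum_c3 hx).mul_left (u * (14 / 15))
  have hB := (hasSum_c2 hx).mul_left (u * (1 / 6))
  have hC := (hasSum_choose_mul_geometric_of_norm_lt_one (𝕜 := ℝ) 2 hnx).mul_left (u * (13 / 8))
  have H := (hA.sub hB).sub hC
  rw [hyx] at H
  -- identify the function
  have hfun : (fun j : ℕ => (1 / 16 : ℝ) * ((-1 : ℝ) ^ j * 12 ^ j *
        ((Nat.factorial (2 * j + 5) : ℝ) * (28 * (j : ℝ) + 65) /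
            (30 * 4 ^ j * (Nat.factorial j : ℝ) * (Nat.factorial (j + 2) : ℝ) * (2 * (j : ℝ) + 5)) -
          13 * ((j : ℝ) + 2) * ((j : ℝ) + 1)) * u ^ (j + 1)))
      = fun j : ℕ => u * (14 / 15) * (c3 j * (-(12 * u)) ^ j)
          - u * (1 / 6) * (c2 j * (-(12 * u)) ^ j)
          - u * (13 / 8) * ((((j + 2).choose 2 : ℕ) : ℝ) * (-(12 * u)) ^ j) := by
    funext j
    have e := term_eq j
    have ht : (-(12 * u)) ^ j = (-1 : ℝ) ^ j * 12 ^ j * u ^ j := by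
      rw [show -(12 * u) = (-1 : ℝ) * 12 * u by ring, mul_pow, mul_pow]
    rw [ht]
    linear_combination ((-1 : ℝ) ^ j * 12 ^ j * u ^ j * u) * e
  -- identify the value
  have hval : (7 * u / 4) * (1 + 12 * u) ^ (-(7 : ℝ) / 2) *
        (1 - (1 + 12 * u) / 14 - (13 / 14) * Real.sqrt (1 + 12 * u))
      = u * (14 / 15) * (15 / 8 * (1 + 12 * u) ^ (-(7 / 2) : ℝ))
        - u * (1 / 6) * (3 / 4 * (1 + 12 * u) ^ (-(5 / 2) : ℝ))
        - u * (13 / 8) * (1 / (1 + 12 * u) ^ (2 + 1)) := by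
    have hE1 : (1 + 12 * u) ^ (-(5 / 2) : ℝ)
        = (1 + 12 * u) ^ (-(7 / 2) : ℝ) * (1 + 12 * u) := by
      rw [show (-(5 / 2) : ℝ) = -(7 / 2) + 1 by norm_num, Real.rpow_add hy, Real.rpow_one]
    have hE2 : (1 / (1 + 12 * u) ^ (2 + 1) : ℝ)
        = (1 + 12 * u) ^ (-(7 / 2) : ℝ) * Real.sqrt (1 + 12 * u) := by
      rw [Real.sqrt_eq_rpow, ← Real.rpow_add hy]
      rw [show (-(7 / 2) + 1 / 2 : ℝ) = -(((2 + 1 : ℕ) : ℝ)) by norm_num]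
      rw [Real.rpow_neg hy.le, Real.rpow_natCast, one_div]
    have hexp : ((-(7 : ℝ) / 2) : ℝ) = (-(7 / 2) : ℝ) := by norm_num
    rw [hexp, hE1, hE2]
    ring
  rw [hfun, hval]
  exact H
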